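/- Let p, q, n, α, β, γ be natural numbers and let M11 : Matrix (Fin α) (Fin p), M12 : Matrix (Fin α) (Fin q), M13 : Matrix (Fin α) (Fin n), M21 : Matrix (Fin β) (Fin p), M22 : Matrix (Fin β) (Fin q), M23 : Matrix (Fin β) (Fin n), M31 : Matrix (Fin γ) (Fin p), M32 : Matrix (Fin γ) (Fin q), M41 : Matrix (Fin n) (Fin p), M43 : Matrix (Fin n) (Fin n) be matrices over ZMod 2. Suppose M43 is invertible, M13 * M43⁻¹ * M41 = 0, and M23 * M43⁻¹ * M41 = M21. Let A be the (α+β+γ+n) × (p+q+n) block matrix with block rows [M11 M12 M13], [0 M22 M23], [M31 M32 0], [M41 0 M43], and let B be the (α+β+γ) × (p+q) block matrix with block rows [M11 M12], [M21 M22], [M31 M32]. Then Matrix.rank A = Matrix.rank B + n. -/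

import Mathlib

open Matrix

section Aux
variable {K : Type*} [Field K]
lemma my_finrank_prod_submodule {V W : Type*} [AddCommGroup V] [Module K V]
    [AddCommGroup W] [Module K W] [FiniteDimensional K V] [FiniteDimensional K W]
    (S : Submodule K V) (T : Submodule K W) :
    Module.finrank K (S.prod T) = Module.finrank K S + Module.finrank K T := by
  have e : (S.prod T) ≃ₗ[K] S × T :=
    { toFun := fun x => (⟨x.1.1, x.2.1⟩, ⟨x.1.2, x.2.2⟩)
      invFun := fun y => ⟨(y.1.1, y.2.1), ⟨y.1.2, y.2.2⟩⟩
      map_add' := fun _ _ => rfl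
      map_smul' := fun _ _ => rfl
      left_inv := fun _ => rfl
      right_inv := fun _ => rfl }
  rw [e.finrank_eq, Module.finrank_prod]

lemma my_range_prodMap {R V₁ V₂ W₁ W₂ : Type*} [CommRing R]
    [AddCommGroup V₁] [Module R V₁] [AddCommGroup V₂] [Module R V₂]
    [AddCommGroup W₁] [Module R W₁] [AddCommGroup W₂] [Module R W₂]
    (f : V₁ →ₗ[R] W₁) (g : V₂ →ₗ[R] W₂) :
    LinearMap.range (f.prodMap g) = (LinearMap.range f).prod (LinearMap.range g) := by
  ext ⟨x, y⟩
  constructor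
  · rintro ⟨⟨a, b⟩, h⟩
    obtain ⟨h1, h2⟩ := Prod.mk.injEq .. ▸ h
    exact ⟨⟨a, h1⟩, ⟨b, h2⟩⟩
  · rintro ⟨⟨a, h1⟩, ⟨b, h2⟩⟩
    exact ⟨(a, b), by simp [LinearMap.prodMap_apply, h1, h2]⟩

lemma my_rank_fromBlocks_diag {m n pp qq : Type*} [Fintype m] [Fintype n] [Fintype pp] [Fintype qq]
    (B : Matrix m pp K) (D : Matrix n qq K) :
    (fromBlocks B 0 0 D).rank = B.rank + D.rank := by
  have key : (fromBlocks B 0 0 D).mulVecLin =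
      (LinearEquiv.sumArrowLequivProdArrow m n K K).symm.toLinearMap ∘ₗ
        (B.mulVecLin.prodMap D.mulVecLin) ∘ₗ
        (LinearEquiv.sumArrowLequivProdArrow pp qq K K).toLinearMap := by
    apply LinearMap.ext fun v => ?_
    funext i
    cases i <;>
      simp [Matrix.mulVec, dotProduct, Fintype.sum_sum_type,
        LinearEquiv.sumArrowLequivProdArrow, Equiv.sumArrowEquivProdArrow, fromBlocks]
  rw [Matrix.rank, key, LinearMap.range_comp, LinearMap.range_comp,
    LinearEquiv.range, Submodule.map_top, LinearEquiv.finrank_map_eq, my_range_prodMap,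
    my_finrank_prod_submodule, Matrix.rank, Matrix.rank]

lemma my_rank_submatrix_equiv {R : Type*} [CommRing R] {k l m n : Type*} [Fintype l] [Fintype n]
    (A : Matrix k l R) (e₁ : m ≃ k) (e₂ : n ≃ l) :
    (A.submatrix e₁ e₂).rank = A.rank := by
  have h : A.submatrix e₁ e₂ = reindex e₁.symm e₂.symm A := rfl
  rw [h, Matrix.rank, Matrix.rank, mulVecLin_reindex, LinearMap.range_comp,
    LinearMap.range_comp, LinearEquiv.range, Submodule.map_top, LinearEquiv.finrank_map_eq]
end Aux

/-- Block elimination identity underlying the proof of the main theorem: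
`rank(M_{L''}) = rank(M_{L'}) + n` after a half twist. -/
theorem stmt_1 (p q n α β γ : ℕ)
    (M11 : Matrix (Fin α) (Fin p) (ZMod 2)) (M12 : Matrix (Fin α) (Fin q) (ZMod 2))
    (M13 : Matrix (Fin α) (Fin n) (ZMod 2))
    (M21 : Matrix (Fin β) (Fin p) (ZMod 2)) (M22 : Matrix (Fin β) (Fin q) (ZMod 2))
    (M23 : Matrix (Fin β) (Fin n) (ZMod 2))
    (M31 : Matrix (Fin γ) (Fin p) (ZMod 2)) (M32 : Matrix (Fin γ) (Fin q) (ZMod 2))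
    (M41 : Matrix (Fin n) (Fin p) (ZMod 2)) (M43 : Matrix (Fin n) (Fin n) (ZMod 2))
    (hM43 : IsUnit M43)
    (h13 : M13 * M43⁻¹ * M41 = 0)
    (h23 : M23 * M43⁻¹ * M41 = M21) :
    Matrix.rank
      (Matrix.fromRows
        (Matrix.fromRows
          (Matrix.fromCols (Matrix.fromCols M11 M12) M13)
          (Matrix.fromCols (Matrix.fromCols 0 M22) M23))
        (Matrix.fromRows
          (Matrix.fromCols (Matrix.fromCols M31 M32) 0)
          (Matrix.fromCols (Matrix.fromCols M41 0) M43))) =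
    Matrix.rank
      (Matrix.fromRows
        (Matrix.fromRows
          (Matrix.fromCols M11 M12)
          (Matrix.fromCols M21 M22))
        (Matrix.fromCols M31 M32)) + n := by
  have hdet : IsUnit M43.det := (Matrix.isUnit_iff_isUnit_det M43).mp hM43
  have hinv : M43⁻¹ * M43 = 1 := nonsing_inv_mul _ hdet
  set Btar : Matrix ((Fin α ⊕ Fin β) ⊕ Fin γ) (Fin p ⊕ Fin q) (ZMod 2) :=
    fromRows (fromRows (fromCols M11 M12) (fromCols M21 M22)) (fromCols M31 M32)
    with hBtar
  set C : Matrix ((Fin α ⊕ Fin β) ⊕ Fin γ) (Fin p ⊕ Fin q) (ZMod 2) :=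
    fromRows (fromRows (fromCols M11 M12) (fromCols 0 M22)) (fromCols M31 M32)
    with hC
  set D : Matrix ((Fin α ⊕ Fin β) ⊕ Fin γ) (Fin n) (ZMod 2) :=
    fromRows (fromRows M13 M23) 0 with hD
  set E : Matrix (Fin n) (Fin p ⊕ Fin q) (ZMod 2) := fromCols M41 0 with hE
  set A' : Matrix (((Fin α ⊕ Fin β) ⊕ Fin γ) ⊕ Fin n) ((Fin p ⊕ Fin q) ⊕ Fin n) (ZMod 2) :=
    fromBlocks C D E M43 with hA'
  have hA :
      (Matrix.fromRows
        (Matrix.fromRows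
          (Matrix.fromCols (Matrix.fromCols M11 M12) M13)
          (Matrix.fromCols (Matrix.fromCols 0 M22) M23))
        (Matrix.fromRows
          (Matrix.fromCols (Matrix.fromCols M31 M32) 0)
          (Matrix.fromCols (Matrix.fromCols M41 0) M43))) =
      A'.submatrix (Equiv.sumAssoc (Fin α ⊕ Fin β) (Fin γ) (Fin n)).symm
        (Equiv.refl ((Fin p ⊕ Fin q) ⊕ Fin n)) := by
    ext i j
    rcases i with (i | i) | (i | i) <;> rcases j with (j | j) | j <;> rfl
  rw [hA, my_rank_submatrix_equiv]
  -- row elimination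
  set X : Matrix ((Fin α ⊕ Fin β) ⊕ Fin γ) (Fin n) (ZMod 2) :=
    fromRows (fromRows (M13 * M43⁻¹) (M23 * M43⁻¹)) 0 with hX
  set U : Matrix (((Fin α ⊕ Fin β) ⊕ Fin γ) ⊕ Fin n) (((Fin α ⊕ Fin β) ⊕ Fin γ) ⊕ Fin n)
      (ZMod 2) := fromBlocks 1 X 0 1 with hU
  have hUdet : IsUnit U.det := by
    rw [hU, det_fromBlocks_zero₂₁, det_one, det_one, one_mul]
    exact isUnit_one
  have hXE : X * E = fromRows (fromRows (fromCols 0 0) (fromCols M21 0)) 0 := by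
    rw [hX, hE, fromRows_mul, fromRows_mul, Matrix.zero_mul, mul_fromCols, mul_fromCols,
      Matrix.mul_zero, Matrix.mul_zero, h13, h23]
  have hXM43 : X * M43 = D := by
    rw [hX, hD, fromRows_mul, fromRows_mul, Matrix.zero_mul, Matrix.mul_assoc, Matrix.mul_assoc,
      hinv, Matrix.mul_one, Matrix.mul_one]
  have hCXE : C + X * E = Btar := by
    rw [hXE, hC, hBtar]
    ext i j
    rcases i with (i | i) | i <;> rcases j with j | j <;>
      simp [fromRows_apply_inl, fromRows_apply_inr, fromCols_apply_inl,
        fromCols_apply_inr]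
  have hDD : D + X * M43 = 0 := by
    rw [hXM43]
    ext i j
    exact CharTwo.add_self_eq_zero _
  have hUA : U * A' = fromBlocks Btar 0 E M43 := by
    rw [hU, hA', fromBlocks_multiply]
    simp only [Matrix.one_mul, Matrix.zero_mul, zero_add, add_zero]
    rw [hCXE, hDD]
  -- column elimination
  set Y : Matrix (Fin n) (Fin p ⊕ Fin q) (ZMod 2) := M43⁻¹ * E with hY
  set V : Matrix ((Fin p ⊕ Fin q) ⊕ Fin n) ((Fin p ⊕ Fin q) ⊕ Fin n) (ZMod 2) :=
    fromBlocks 1 0 Y 1 with hV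
  have hVdet : IsUnit V.det := by
    rw [hV, det_fromBlocks_zero₁₂, det_one, det_one, one_mul]
    exact isUnit_one
  have hEY : E + M43 * Y = 0 := by
    rw [hY, ← Matrix.mul_assoc, mul_nonsing_inv _ hdet, Matrix.one_mul]
    ext i j
    exact CharTwo.add_self_eq_zero _
  have hUAV : U * A' * V = fromBlocks Btar 0 0 M43 := by
    rw [hUA, hV, fromBlocks_multiply]
    simp only [Matrix.mul_one, Matrix.mul_zero, Matrix.zero_mul, zero_add, add_zero]
    rw [hEY]
  have : (U * A' * V).rank = A'.rank := by
    rw [rank_mul_eq_left_of_isUnit_det _ _ hVdet, rank_mul_eq_right_of_isUnit_det _ _ hUdet]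
  rw [← this, hUAV, my_rank_fromBlocks_diag, rank_of_isUnit _ hM43, Fintype.card_fin]
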